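/- With the notation of the 3-complete setup, for all w ∈ W' one has ht(ρ(w)(α_1)) ≥ ℓ(w) + 1, where ht(Σ c_i α_i) = Σ c_i is the height of a vector with respect to the standard basis. -/

import Mathlib

open Finset

/-- The `i`-th standard basis vector. -/
noncomputable def bv {l : ℕ} (i : Fin l) : Fin l → ℝ := Pi.single i 1

lemma bv_apply {l : ℕ} (i k : Fin l) : bv i k = if k = i then 1 else 0 := by
  simp [bv, Pi.single_apply]

lemma bv_sum {l : ℕ} (i : Fin l) : ∑ k, bv i k = 1 := by
  simp [bv_apply]

section Aux

variable {l : ℕ} {M : CoxeterMatrix (Fin l)} {W : Type*} [Group W]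
variable (cs : CoxeterSystem M W) (ρ : W →* Module.End ℝ (Fin l → ℝ))

/-- The hypothesis on `ρ`. -/
def RhoProp : Prop :=
  ∀ i : Fin l,
    (ρ (cs.simple i)) (Pi.single i (1 : ℝ)) = -Pi.single i 1 ∧
    ∀ j : Fin l, j ≠ i →
      (ρ (cs.simple i)) (Pi.single j (1 : ℝ)) = Pi.single i 1 + Pi.single j 1

variable {cs ρ}

lemma act_bv_self (hρ : RhoProp cs ρ) (i : Fin l) :
    ρ (cs.simple i) (bv i) = -bv i := (hρ i).1

lemma act_bv_ne (hρ : RhoProp cs ρ) {i j : Fin l} (h : j ≠ i) :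
    ρ (cs.simple i) (bv j) = bv i + bv j := (hρ i).2 j h

lemma act_apply (hρ : RhoProp cs ρ) (i : Fin l) (v : Fin l → ℝ) (k : Fin l) :
    (ρ (cs.simple i) v) k = if k = i then (∑ m, v m) - 2 * v i else v k := by
  have hv : v = ∑ m : Fin l, (v m) • bv m := by
    funext k
    simp [Finset.sum_apply, bv_apply]
  calc (ρ (cs.simple i) v) k
      = (ρ (cs.simple i) (∑ m : Fin l, (v m) • bv m)) k := by rw [← hv]
    _ = ∑ m : Fin l, (v m) * ((ρ (cs.simple i) (bv m)) k) := by
        rw [map_sum]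
        simp [Finset.sum_apply]
    _ = if k = i then (∑ m, v m) - 2 * v i else v k := by
        rw [← Finset.add_sum_erase _ _ (Finset.mem_univ i), act_bv_self hρ]
        have h1 : ∀ m ∈ Finset.univ.erase i,
            v m * ((ρ (cs.simple i) (bv m)) k) = v m * (bv i k + bv m k) := by
          intro m hm
          rw [act_bv_ne hρ (Finset.ne_of_mem_erase hm)]
          rfl
        rw [Finset.sum_congr rfl h1]
        by_cases hk : k = i
        · subst hk
          have h2 : ∀ m ∈ Finset.univ.erase k, v m * (bv k k + bv m k) = v m := by
            intro m hm
            rw [bv_apply, bv_apply, if_pos rfl,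
              if_neg (fun h => (Finset.ne_of_mem_erase hm) h.symm)]
            ring
          rw [Finset.sum_congr rfl h2, Finset.sum_erase_eq_sub (Finset.mem_univ k),
            if_pos rfl]
          have : bv k k = 1 := by rw [bv_apply, if_pos rfl]
          rw [Pi.neg_apply, this]
          ring
        · have h2 : ∀ m ∈ Finset.univ.erase i,
              v m * (bv i k + bv m k) = if m = k then v k else 0 := by
            intro m hm
            rw [bv_apply, bv_apply, if_neg hk]
            rcases eq_or_ne m k with rfl | hmk
            · rw [if_pos rfl, if_pos rfl]; ring
            · rw [if_neg (fun h => hmk h.symm), if_neg hmk]; ring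
          rw [Finset.sum_congr rfl h2, Finset.sum_ite_eq' (Finset.univ.erase i) k,
            if_pos (Finset.mem_erase.mpr ⟨hk, Finset.mem_univ k⟩), if_neg hk,
            Pi.neg_apply, bv_apply, if_neg hk]
          ring

lemma act_sum (hρ : RhoProp cs ρ) (i : Fin l) (v : Fin l → ℝ) :
    ∑ k, (ρ (cs.simple i) v) k = 2 * (∑ k, v k) - 3 * v i := by
  rw [Finset.sum_congr rfl (fun k _ => act_apply hρ i v k),
    ← Finset.add_sum_erase _ _ (Finset.mem_univ i), if_pos rfl]
  have h2 : ∀ m ∈ Finset.univ.erase i,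
      (if m = i then (∑ m, v m) - 2 * v i else v m) = v m := by
    intro m hm
    rw [if_neg (Finset.ne_of_mem_erase hm)]
  rw [Finset.sum_congr rfl h2, Finset.sum_erase_eq_sub (Finset.mem_univ i)]
  ring


/-- Twice the standard Coxeter bilinear form. -/
noncomputable def Bform {l : ℕ} (u v : Fin l → ℝ) : ℝ :=
  3 * (∑ k, u k * v k) - (∑ k, u k) * (∑ k, v k)

lemma Bform_simple (hρ : RhoProp cs ρ) (i : Fin l) (u v : Fin l → ℝ) :
    Bform (ρ (cs.simple i) u) (ρ (cs.simple i) v) = Bform u v := by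
  unfold Bform
  rw [act_sum hρ, act_sum hρ]
  have key : ∑ k, (ρ (cs.simple i) u) k * (ρ (cs.simple i) v) k
      = (∑ k, u k * v k) - u i * v i
        + ((∑ m, u m) - 2 * u i) * ((∑ m, v m) - 2 * v i) := by
    rw [← Finset.add_sum_erase _ (fun k => (ρ (cs.simple i) u) k * (ρ (cs.simple i) v) k)
      (Finset.mem_univ i)]
    have h2 : ∀ m ∈ Finset.univ.erase i,
        (ρ (cs.simple i) u) m * (ρ (cs.simple i) v) m = u m * v m := by
      intro m hm
      rw [act_apply hρ, act_apply hρ, if_neg (Finset.ne_of_mem_erase hm),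
        if_neg (Finset.ne_of_mem_erase hm)]
    rw [Finset.sum_congr rfl h2, Finset.sum_erase_eq_sub (Finset.mem_univ i),
      act_apply hρ, act_apply hρ, if_pos rfl, if_pos rfl]
    ring
  rw [key]
  ring

lemma Bform_inv (hρ : RhoProp cs ρ) (w : W) :
    ∀ u v : Fin l → ℝ, Bform (ρ w u) (ρ w v) = Bform u v := by
  induction w using cs.simple_induction with
  | simple i => exact fun u v => Bform_simple hρ i u v
  | one => intro u v; simp
  | mul w₁ w₂ h₁ h₂ =>
      intro u v
      rw [map_mul]
      have e : ∀ x : Fin l → ℝ, (ρ w₁ * ρ w₂) x = ρ w₁ (ρ w₂ x) := fun x => rfl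
      rw [e, e, h₁, h₂]


lemma simple_ne (hρ : RhoProp cs ρ) {i j : Fin l} (h : i ≠ j) :
    cs.simple i ≠ cs.simple j := by
  intro hs
  have h1 : ρ (cs.simple i) (bv i) = -bv i := act_bv_self hρ i
  have h2 : ρ (cs.simple j) (bv i) = bv j + bv i := act_bv_ne hρ h
  rw [hs, h2] at h1
  have h3 := congrFun h1 i
  rw [Pi.add_apply, Pi.neg_apply] at h3
  simp only [bv_apply, if_pos rfl, if_neg (fun hh : i = j => h hh)] at h3
  norm_num at h3

section Dihedral

variable (hρ : RhoProp cs ρ) {i j : Fin l} (hij : i ≠ j)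
  (hbraid : cs.simple i * cs.simple j * cs.simple i
    = cs.simple j * cs.simple i * cs.simple j)

include hij hbraid in
lemma dihedral_mem (ω : List (Fin l)) (hω : ∀ x ∈ ω, x = i ∨ x = j) :
    cs.wordProd ω = 1 ∨ cs.wordProd ω = cs.simple i ∨ cs.wordProd ω = cs.simple j ∨
    cs.wordProd ω = cs.simple i * cs.simple j ∨
    cs.wordProd ω = cs.simple j * cs.simple i ∨
    cs.wordProd ω = cs.simple i * cs.simple j * cs.simple i := by
  induction ω with
  | nil => left; simp
  | cons x ω ih =>
      have hx := hω x (List.mem_cons_self)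
      have ihh := ih (fun y hy => hω y (List.mem_cons_of_mem x hy))
      rw [cs.wordProd_cons]
      rcases hx with rfl | rfl
      · rcases ihh with h | h | h | h | h | h <;> rw [h]
        · right; left; simp
        · left; simp
        · right; right; right; left; rfl
        · right; right; left
          rw [← mul_assoc]; simp
        · right; right; right; right; right; rw [← mul_assoc]
        · right; right; right; right; left
          rw [← mul_assoc, ← mul_assoc]; simp
      · rcases ihh with h | h | h | h | h | h <;> rw [h]
        · right; right; left; simp
        · right; right; right; right; left; rfl
        · left; simp
        · right; right; right; right; right
          rw [← mul_assoc, ← hbraid]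
        · right; left
          rw [← mul_assoc]; simp
        · right; right; right; left
          rw [← mul_assoc, ← mul_assoc, ← hbraid]
          simp


include hρ hij in
lemma rho_sj : ρ (cs.simple j) (bv i) = bv j + bv i :=
  act_bv_ne hρ hij

include hρ hij in
lemma rho_sisj : ρ (cs.simple i * cs.simple j) (bv i) = bv j := by
  have e : ρ (cs.simple i * cs.simple j) (bv i)
      = ρ (cs.simple i) (ρ (cs.simple j) (bv i)) := by rw [map_mul]; rfl
  rw [e, rho_sj hρ hij, map_add, act_bv_self hρ, act_bv_ne hρ (fun h => hij h.symm)]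
  abel

include hρ hij in
lemma rho_sjsi : ρ (cs.simple j * cs.simple i) (bv i) = -(bv j + bv i) := by
  have e : ρ (cs.simple j * cs.simple i) (bv i)
      = ρ (cs.simple j) (ρ (cs.simple i) (bv i)) := by rw [map_mul]; rfl
  rw [e, act_bv_self hρ, map_neg, rho_sj hρ hij]

include hρ hij in
lemma rho_sisjsi : ρ (cs.simple i * cs.simple j * cs.simple i) (bv i) = -bv j := by
  have e : ρ (cs.simple i * cs.simple j * cs.simple i) (bv i)
      = ρ (cs.simple i * cs.simple j) (ρ (cs.simple i) (bv i)) := by rw [map_mul]; rfl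
  rw [e, act_bv_self hρ, map_neg, rho_sisj hρ hij]

include hρ hij hbraid in
lemma dihedral_val (ω : List (Fin l)) (hω : ∀ x ∈ ω, x = i ∨ x = j)
    (hlen : cs.length (cs.wordProd ω) < cs.length (cs.wordProd ω * cs.simple i)) :
    ρ (cs.wordProd ω) (bv i) = bv i ∨ ρ (cs.wordProd ω) (bv i) = bv j + bv i ∨
      ρ (cs.wordProd ω) (bv i) = bv j := by
  rcases dihedral_mem hij hbraid ω hω with h | h | h | h | h | h
  · left; rw [h]; simp
  · exfalso
    rw [h, cs.simple_mul_simple_self] at hlen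
    simp [cs.length_simple] at hlen
  · right; left; rw [h, rho_sj hρ hij]
  · right; right; rw [h, rho_sisj hρ hij]
  · exfalso
    rw [h, cs.simple_mul_simple_cancel_right, cs.length_simple] at hlen
    have h0 : cs.length (cs.simple j * cs.simple i) = 0 := by omega
    have h1 : cs.simple j * cs.simple i = 1 := cs.length_eq_zero_iff.mp h0
    have h2 : cs.simple j = cs.simple i := by
      rw [eq_inv_of_mul_eq_one_left h1, cs.inv_simple]
    exact simple_ne hρ (fun hh => hij hh.symm) h2
  · exfalso
    rw [h, cs.simple_mul_simple_cancel_right] at hlen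
    have hle : cs.length (cs.simple i * cs.simple j) ≤ 2 := by
      have := cs.length_mul_le (cs.simple i) (cs.simple j)
      rw [cs.length_simple, cs.length_simple] at this
      omega
    have h1 : cs.length (cs.simple i * cs.simple j * cs.simple i) ≤ 1 := by omega
    rcases Nat.lt_or_ge (cs.length (cs.simple i * cs.simple j * cs.simple i)) 1 with h2 | h2
    · have h0 : cs.simple i * cs.simple j * cs.simple i = 1 :=
        cs.length_eq_zero_iff.mp (by omega)
      have h3 : cs.simple i * cs.simple j = cs.simple i := by
        rw [eq_inv_of_mul_eq_one_left h0, cs.inv_simple]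
      have h4 : cs.simple j = 1 :=
        mul_left_cancel (a := cs.simple i) (by rw [h3, mul_one])
      have h5 := cs.length_simple j
      rw [h4, cs.length_one] at h5
      exact absurd h5 (by norm_num)
    · have h3 : cs.length (cs.simple i * cs.simple j * cs.simple i) = 1 := by omega
      obtain ⟨k, hk⟩ := cs.length_eq_one_iff.mp h3
      have hval : ρ (cs.simple i * cs.simple j * cs.simple i) (bv i) = -bv j :=
        rho_sisjsi hρ hij
      rw [hk] at hval
      rcases eq_or_ne k i with rfl | hki
      · rw [act_bv_self hρ] at hval
        have := congrFun hval k
        simp only [Pi.neg_apply, bv_apply, if_pos rfl,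
          if_neg (fun hh : k = j => hij hh)] at this
        norm_num at this
      · rw [act_bv_ne hρ (fun hh => hki hh.symm)] at hval
        have := congrFun hval i
        simp only [Pi.add_apply, Pi.neg_apply, bv_apply, if_pos rfl,
          if_neg (fun hh : i = j => hij hh)] at this
        split_ifs at this <;> norm_num at this

end Dihedral


lemma braid_of (hM : ∀ i j : Fin l, M.M i j = if i = j then 1 else 3)
    {i j : Fin l} (hij : i ≠ j) :
    cs.simple i * cs.simple j * cs.simple i = cs.simple j * cs.simple i * cs.simple j := by
  have h3 : (cs.simple i * cs.simple j) ^ (M.M i j) = 1 := cs.simple_mul_simple_pow i j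
  have hm : M.M i j = 3 := by rw [hM]; simp [hij]
  rw [hm, show (3:ℕ) = 2 + 1 from rfl, pow_succ, pow_two] at h3
  have h5 : (cs.simple i * cs.simple j * cs.simple i) * (cs.simple j * cs.simple i * cs.simple j)
      = 1 := by
    calc (cs.simple i * cs.simple j * cs.simple i) * (cs.simple j * cs.simple i * cs.simple j)
        = cs.simple i * cs.simple j * (cs.simple i * cs.simple j) * (cs.simple i * cs.simple j) := by
          group
      _ = 1 := h3
  rw [eq_inv_of_mul_eq_one_left h5, mul_inv_rev, mul_inv_rev, cs.inv_simple, cs.inv_simple]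
  exact (mul_assoc _ _ _).symm

lemma tits (hρ : RhoProp cs ρ) (hM : ∀ i j : Fin l, M.M i j = if i = j then 1 else 3) :
    ∀ n (w : W) (i : Fin l), cs.length w = n → cs.length (w * cs.simple i) = n + 1 →
      (∀ k, 0 ≤ ρ w (bv i) k) ∧ 1 ≤ ∑ k, ρ w (bv i) k := by
  intro n
  induction n using Nat.strong_induction_on with
  | _ n ih =>
  intro w i hw hwi
  rcases eq_or_ne w 1 with rfl | hne
  · rw [map_one]
    have e : (1 : Module.End ℝ (Fin l → ℝ)) (bv i) = bv i := rfl
    constructor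
    · intro k
      rw [e, bv_apply]
      split_ifs <;> norm_num
    · rw [e, bv_sum]
  · obtain ⟨j, hj⟩ := cs.exists_rightDescent_of_ne_one hne
    rw [CoxeterSystem.IsRightDescent, hw] at hj
    have hj' : cs.length (w * cs.simple j) + 1 = n := by
      rcases cs.length_mul_simple w j with h | h
      · rw [hw] at h; omega
      · rw [hw] at h; exact h
    have hij : i ≠ j := by
      rintro rfl
      omega
    set P : ℕ → Prop := fun m => ∃ p : W × List (Fin l), (∀ x ∈ p.2, x = i ∨ x = j) ∧
      p.1 * cs.wordProd p.2 = w ∧ cs.length p.1 + p.2.length = n ∧ cs.length p.1 = m with hPdef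
    have hPne : P (cs.length (w * cs.simple j)) := by
      refine ⟨⟨w * cs.simple j, [j]⟩, ?_, ?_, ?_, rfl⟩
      · intro x hx
        simp only [List.mem_singleton] at hx
        right; exact hx
      · simp [cs.simple_mul_simple_cancel_right]
      · simpa using hj'
    have hnon : Set.Nonempty {m | P m} := ⟨_, hPne⟩
    have hm₀P : P (sInf {m | P m}) := Nat.sInf_mem hnon
    set m₀ := sInf {m | P m} with hm₀def
    obtain ⟨⟨v, ω⟩, hω, hvw, hlen, hv⟩ := hm₀P
    dsimp only at hω hvw hlen hv
    have hm₀le : m₀ ≤ cs.length (w * cs.simple j) :=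
      Nat.sInf_le (show cs.length (w * cs.simple j) ∈ {m | P m} from hPne)
    have hm₀n : m₀ < n := by omega
    have asc : ∀ x : Fin l, (x = i ∨ x = j) → cs.length (v * cs.simple x) = cs.length v + 1 := by
      intro x hx
      rcases cs.length_mul_simple v x with h | h
      · exact h
      · exfalso
        have hPx : P (cs.length (v * cs.simple x)) := by
          refine ⟨⟨v * cs.simple x, x :: ω⟩, ?_, ?_, ?_, rfl⟩
          · intro y hy
            rcases List.mem_cons.mp hy with rfl | hy
            · exact hx
            · exact hω y hy
          · rw [cs.wordProd_cons, ← mul_assoc, cs.simple_mul_simple_cancel_right]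
            exact hvw
          · simp only [List.length_cons]
            omega
        have := Nat.sInf_le (show cs.length (v * cs.simple x) ∈ {m | P m} from hPx)
        omega
    have Qi := ih m₀ hm₀n v i hv (by rw [asc i (Or.inl rfl), hv])
    have Qj := ih m₀ hm₀n v j hv (by rw [asc j (Or.inr rfl), hv])
    have hcond : cs.length (cs.wordProd ω) < cs.length (cs.wordProd ω * cs.simple i) := by
      have h1 : cs.length (w * cs.simple i) ≤ cs.length v
          + cs.length (cs.wordProd ω * cs.simple i) := by
        conv_lhs => rw [← hvw, mul_assoc]
        exact cs.length_mul_le _ _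
      have h2 : cs.length (cs.wordProd ω) ≤ ω.length := cs.length_wordProd_le ω
      omega
    have hbraid := braid_of (cs := cs) hM hij
    have hw' : ∀ x : Fin l → ℝ, ρ w x = ρ v (ρ (cs.wordProd ω) x) := by
      intro x
      rw [← hvw, map_mul]
      rfl
    rcases dihedral_val hρ hij hbraid ω hω hcond with hval | hval | hval
    · rw [hw', hval]
      exact Qi
    · rw [hw', hval, map_add]
      constructor
      · intro k
        rw [Pi.add_apply]
        exact add_nonneg (Qj.1 k) (Qi.1 k)
      · simp only [Pi.add_apply, Finset.sum_add_distrib]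
        have := Qi.2
        have := Qj.2
        linarith
    · rw [hw', hval]
      exact Qj


lemma Bform_bv_right (a : Fin l → ℝ) (x : Fin l) :
    Bform a (bv x) = 3 * a x - ∑ k, a k := by
  unfold Bform
  rw [bv_sum]
  have h : ∑ k, a k * bv x k = a x := by
    simp only [bv_apply, mul_ite, mul_one, mul_zero, Finset.sum_ite_eq', Finset.mem_univ,
      if_true]
  rw [h]
  ring

lemma Bform_bv_left (a : Fin l → ℝ) (x : Fin l) :
    Bform (bv x) a = 3 * a x - ∑ k, a k := by
  unfold Bform
  rw [bv_sum]
  have h : ∑ k, bv x k * a k = a x := by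
    simp only [bv_apply, ite_mul, one_mul, zero_mul, Finset.sum_ite_eq', Finset.mem_univ,
      if_true]
  rw [h]
  ring

lemma support_lemma (hρ : RhoProp cs ρ) (i0 : Fin l) :
    ∀ ω : List (Fin l), (∀ x ∈ ω, x ≠ i0) → ∀ v : Fin l → ℝ,
      (ρ (cs.wordProd ω) v) i0 = v i0 := by
  intro ω
  induction ω with
  | nil => intro _ v; simp [cs.wordProd_nil]
  | cons x ω ih =>
      intro hx v
      rw [cs.wordProd_cons]
      have e : ρ (cs.simple x * cs.wordProd ω) v
          = ρ (cs.simple x) (ρ (cs.wordProd ω) v) := by rw [map_mul]; rfl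
      rw [e, act_apply hρ, if_neg (fun h => hx x (List.mem_cons_self) h.symm)]
      exact ih (fun y hy => hx y (List.mem_cons_of_mem x hy)) v

lemma word_of_mem {i0 : Fin l} {w : W}
    (hw : w ∈ Subgroup.closure {x : W | ∃ i : Fin l, i ≠ i0 ∧ x = cs.simple i}) :
    ∃ ω : List (Fin l), (∀ x ∈ ω, x ≠ i0) ∧ w = cs.wordProd ω := by
  induction hw using Subgroup.closure_induction with
  | mem x hx =>
      obtain ⟨i, hi, rfl⟩ := hx
      exact ⟨[i], by simpa using hi, (cs.wordProd_singleton i).symm⟩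
  | one => exact ⟨[], by simp, by simp⟩
  | mul x y _ _ hx hy =>
      obtain ⟨ω₁, h₁, rfl⟩ := hx
      obtain ⟨ω₂, h₂, rfl⟩ := hy
      exact ⟨ω₁ ++ ω₂, by
        intro z hz
        rcases List.mem_append.mp hz with h | h
        · exact h₁ z h
        · exact h₂ z h, (cs.wordProd_append ω₁ ω₂).symm⟩
  | inv x _ hx =>
      obtain ⟨ω, h₁, rfl⟩ := hx
      exact ⟨ω.reverse, fun z hz => h₁ z (List.mem_reverse.mp hz),
        (cs.wordProd_reverse ω).symm⟩

lemma no_left_descent (hρ : RhoProp cs ρ)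
    (hM : ∀ i j : Fin l, M.M i j = if i = j then 1 else 3) (i0 : Fin l)
    (ω : List (Fin l)) (hω : ∀ x ∈ ω, x ≠ i0) :
    ¬ (cs.length (cs.simple i0 * cs.wordProd ω) < cs.length (cs.wordProd ω)) := by
  intro hdesc
  set w := cs.wordProd ω with hwdef
  have hui : cs.length (w⁻¹ * cs.simple i0) < cs.length w⁻¹ := by
    rw [show w⁻¹ * cs.simple i0 = (cs.simple i0 * w)⁻¹ by rw [mul_inv_rev, cs.inv_simple],
      cs.length_inv, cs.length_inv]
    exact hdesc
  have hlen : cs.length (w⁻¹ * cs.simple i0) + 1 = cs.length w⁻¹ := by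
    rcases cs.length_mul_simple w⁻¹ i0 with h | h
    · omega
    · exact h
  have hback : cs.length ((w⁻¹ * cs.simple i0) * cs.simple i0)
      = cs.length (w⁻¹ * cs.simple i0) + 1 := by
    rw [cs.simple_mul_simple_cancel_right]
    omega
  have hQ := tits hρ hM (cs.length (w⁻¹ * cs.simple i0)) (w⁻¹ * cs.simple i0) i0 rfl hback
  have hγ : ρ w⁻¹ (bv i0) = -(ρ (w⁻¹ * cs.simple i0) (bv i0)) := by
    have e0 : w⁻¹ = (w⁻¹ * cs.simple i0) * cs.simple i0 := by
      rw [cs.simple_mul_simple_cancel_right]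
    have e : ρ w⁻¹ (bv i0)
        = ρ (w⁻¹ * cs.simple i0) (ρ (cs.simple i0) (bv i0)) := by
      conv_lhs => rw [e0]
      rw [map_mul]
      rfl
    rw [e, act_bv_self hρ, map_neg]
  have hsupp : (ρ w⁻¹ (bv i0)) i0 = 1 := by
    have e : w⁻¹ = cs.wordProd ω.reverse := (cs.wordProd_reverse ω).symm
    rw [e, support_lemma hρ i0 ω.reverse (fun z hz => hω z (List.mem_reverse.mp hz)),
      bv_apply, if_pos rfl]
  rw [hγ] at hsupp
  have := hQ.1 i0
  rw [Pi.neg_apply] at hsupp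
  linarith

lemma main_aux (hρ : RhoProp cs ρ)
    (hM : ∀ i j : Fin l, M.M i j = if i = j then 1 else 3) (i0 : Fin l) :
    ∀ n, ∀ ω : List (Fin l), (∀ x ∈ ω, x ≠ i0) → cs.length (cs.wordProd ω) = n →
      (n : ℝ) + 1 ≤ ∑ k, ρ (cs.wordProd ω) (bv i0) k := by
  intro n
  induction n using Nat.strong_induction_on with
  | _ n ih =>
  intro ω hω hn
  rcases eq_or_ne (cs.wordProd ω) 1 with h1 | h1
  · rw [h1] at hn ⊢
    rw [cs.length_one] at hn
    subst hn
    rw [map_one]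
    have e : (1 : Module.End ℝ (Fin l → ℝ)) (bv i0) = bv i0 := rfl
    rw [e, bv_sum]
    norm_num
  · obtain ⟨x, hx⟩ := cs.exists_leftDescent_of_ne_one h1
    rw [CoxeterSystem.IsLeftDescent] at hx
    have hxne : x ≠ i0 := by
      rintro rfl
      exact no_left_descent hρ hM x ω hω hx
    set w := cs.wordProd ω with hwdef
    set u := cs.simple x * w with hudef
    have huw : cs.length u + 1 = cs.length w := by
      rcases cs.length_simple_mul w x with h | h
      · rw [← hudef] at h; omega
      · rw [← hudef] at h; exact h
    have huword : u = cs.wordProd (x :: ω) := by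
      rw [cs.wordProd_cons, hudef]
    have hIH : (cs.length u : ℝ) + 1 ≤ ∑ k, ρ u (bv i0) k := by
      have := ih (cs.length u) (by omega) (x :: ω)
        (by
          intro z hz
          rcases List.mem_cons.mp hz with rfl | hz
          · exact hxne
          · exact hω z hz)
        (by rw [← huword])
      rwa [← huword] at this
    -- ascent for u⁻¹ at x
    have hux : u⁻¹ * cs.simple x = w⁻¹ := by
      rw [hudef, mul_inv_rev, cs.inv_simple, mul_assoc, cs.simple_mul_simple_self, mul_one]
    have hascent : cs.length (u⁻¹ * cs.simple x) = cs.length u⁻¹ + 1 := by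
      rw [hux, cs.length_inv, cs.length_inv]
      omega
    have hQ := tits hρ hM (cs.length u⁻¹) u⁻¹ x rfl hascent
    have hsupp : (ρ u⁻¹ (bv x)) i0 = 0 := by
      have e : u⁻¹ = cs.wordProd (x :: ω).reverse := by
        rw [cs.wordProd_reverse, ← huword]
      rw [e, support_lemma hρ i0 (x :: ω).reverse
        (by
          intro z hz
          rcases List.mem_cons.mp (List.mem_reverse.mp hz) with rfl | hz
          · exact hxne
          · exact hω z hz),
        bv_apply, if_neg (fun h => hxne h.symm)]
    have hBinv : Bform (ρ u (bv i0)) (bv x) = Bform (bv i0) (ρ u⁻¹ (bv x)) := by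
      have e : bv x = ρ u (ρ u⁻¹ (bv x)) := by
        have e1 : ρ (u * u⁻¹) (bv x) = ρ u (ρ u⁻¹ (bv x)) := by
          rw [map_mul]; rfl
        rw [mul_inv_cancel, map_one] at e1
        exact e1
      conv_lhs => rw [e]
      rw [Bform_inv hρ]
    have hkey : 3 * (ρ u (bv i0)) x - ∑ k, ρ u (bv i0) k ≤ -1 := by
      have h1 : Bform (ρ u (bv i0)) (bv x) = 3 * (ρ u (bv i0)) x - ∑ k, ρ u (bv i0) k :=
        Bform_bv_right _ _
      have h2 : Bform (bv i0) (ρ u⁻¹ (bv x))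
          = 3 * (ρ u⁻¹ (bv x)) i0 - ∑ k, ρ u⁻¹ (bv x) k := Bform_bv_left _ _
      have h3 := hQ.2
      rw [h1, h2, hsupp] at hBinv
      linarith
    have hfin : ∑ k, ρ w (bv i0) k = 2 * (∑ k, ρ u (bv i0) k) - 3 * (ρ u (bv i0)) x := by
      have e0 : w = cs.simple x * u := by
        rw [hudef, ← mul_assoc, cs.simple_mul_simple_self, one_mul]
      have e : ρ w (bv i0) = ρ (cs.simple x) (ρ u (bv i0)) := by
        conv_lhs => rw [e0]
        rw [map_mul]
        rfl
      rw [e, act_sum hρ]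
    have hcast : (n : ℝ) = (cs.length u : ℝ) + 1 := by
      rw [← hn, ← huw]
      push_cast
      ring
    rw [hfin, hcast]
    linarith

end Aux

/-- `c_k(w)`: the `k`-th coordinate of `ρ(w)(α_{i0})`, where `α_{i0}` is the `i0`-th
standard basis vector. -/
noncomputable def coeffc {l : ℕ} {W : Type*} [Group W]
    (ρ : W →* Module.End ℝ (Fin l → ℝ)) (i0 : Fin l) (w : W) (k : Fin l) : ℝ :=
  ρ w (Pi.single i0 1) k

/-- `d_i(w) = 2 c_i(w) - Σ_{k ≠ i} c_k(w)`. -/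
noncomputable def coeffd {l : ℕ} {W : Type*} [Group W]
    (ρ : W →* Module.End ℝ (Fin l → ℝ)) (i0 : Fin l) (w : W) (i : Fin l) : ℝ :=
  2 * coeffc ρ i0 w i - ∑ k ∈ Finset.univ.erase i, coeffc ρ i0 w k

theorem height_ge_length_add_one (l : ℕ) (hl : 2 ≤ l)
    (M : CoxeterMatrix (Fin l))
    (hM : ∀ i j : Fin l, M.M i j = if i = j then 1 else 3)
    (W : Type*) [Group W] (cs : CoxeterSystem M W)
    (ρ : W →* Module.End ℝ (Fin l → ℝ))
    (hρ : ∀ i : Fin l,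
      (ρ (cs.simple i)) (Pi.single i (1 : ℝ)) = -Pi.single i 1 ∧
      ∀ j : Fin l, j ≠ i →
        (ρ (cs.simple i)) (Pi.single j (1 : ℝ)) = Pi.single i 1 + Pi.single j 1)
    (i0 : Fin l) (hi0 : (i0 : ℕ) = 0)
    (w : W) (hw : w ∈ Subgroup.closure {x : W | ∃ i : Fin l, i ≠ i0 ∧ x = cs.simple i}) :
    (cs.length w : ℝ) + 1 ≤ ∑ k : Fin l, coeffc ρ i0 w k := by
  obtain ⟨ω, hω, rfl⟩ := word_of_mem hw
  have hρ' : RhoProp cs ρ := hρ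
  have h := main_aux hρ' hM i0 (cs.length (cs.wordProd ω)) ω hω rfl
  simpa [coeffc, bv] using h
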